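/- Let a be a prime number with a ≡ 1 (mod 4). Then there exists a prime number b with b ≡ 3 (mod 4) such that a is a quadratic non-residue modulo b, i.e., the Legendre symbol (a/b) = -1. -/

import Mathlib

/-- Legendre's Lemma: for every prime `a ≡ 1 (mod 4)` there exists a prime
`b ≡ 3 (mod 4)` of which `a` is a quadratic non-residue, i.e. `(a/b) = -1`. -/
theorem legendre_lemma (a : ℕ) (ha : a.Prime) (ha4 : a % 4 = 1) :
    ∃ b : ℕ, ∃ hb : b.Prime, b % 4 = 3 ∧ @legendreSym b ⟨hb⟩ (a : ℤ) = -1 := by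
  haveI : Fact a.Prime := ⟨ha⟩
  have ha2 : a ≠ 2 := by omega
  have hchar : ringChar (ZMod a) ≠ 2 := by
    rw [ZMod.ringChar_zmod_n]; exact ha2
  obtain ⟨c, hc⟩ := FiniteField.exists_nonsquare hchar
  have hc0 : c ≠ 0 := fun h => hc (h ▸ ⟨0, by simp⟩)
  have hcop : Nat.Coprime 4 a := by
    have h2 : Nat.Coprime 2 a := (Nat.coprime_primes Nat.prime_two ha).2 (by omega)
    simpa using (h2.pow_left 2 : Nat.Coprime (2^2) a)
  haveI : NeZero (4 * a) := ⟨by have := ha.pos; omega⟩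
  let e := ZMod.chineseRemainder hcop
  set x : ZMod (4 * a) := e.symm (3, c) with hx
  have hunit : IsUnit x := by
    have h3 : IsUnit ((3, c) : ZMod 4 × ZMod a) := by
      refine isUnit_iff_exists_inv.mpr ⟨(3, c⁻¹), ?_⟩
      have h9 : (3 : ZMod 4) * 3 = 1 := by decide
      rw [Prod.mk_mul_mk, h9, mul_inv_cancel₀ hc0, Prod.mk_one_one]
    exact h3.map e.symm.toRingHom
  obtain ⟨b, hba, hb, hbx⟩ := Nat.forall_exists_prime_gt_and_eq_mod hunit a
  haveI : Fact b.Prime := ⟨hb⟩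
  have hex : e ((b : ZMod (4 * a))) = (3, c) := by
    rw [hbx, hx, RingEquiv.apply_symm_apply]
  have hb4 : (b : ZMod 4) = 3 := by
    have := congrArg Prod.fst hex
    simpa [ZMod.chineseRemainder, e] using this
  have hba2 : (b : ZMod a) = c := by
    have := congrArg Prod.snd hex
    simpa [ZMod.chineseRemainder, e] using this
  have hbmod : b % 4 = 3 := by
    have := congrArg ZMod.val hb4
    simpa [ZMod.val_natCast] using this.trans (by decide : ZMod.val (3 : ZMod 4) = 3)
  have hb2 : b ≠ 2 := by omega
  refine ⟨b, hb, hbmod, ?_⟩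
  rw [legendreSym.quadratic_reciprocity_one_mod_four ha4 hb2]
  rw [legendreSym.eq_neg_one_iff' (p := a), hba2]
  exact hc
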